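/- arXiv:1602.06319 — 2 statements merged into one kernel-verified Lean document; each statement's English description precedes it below -/
import Mathlib

section
/- For 0 < q < 1, x ∈ [0,1], and nonnegative integers n, l, the q-Bernstein basis functions b_{n,l}^k(q;x) = binom(n+l,k)_q x^k (1-x)_q^{n+l-k} satisfy Σ_{k=0}^{n+l} b_{n,l}^k(q;x) q^k = 1 - (1-q)[n+l]_q x. -/
noncomputable section

/-- q-integer [n]_q = (1-q^n)/(1-q). -/
def qInt (q : ℝ) (n : ℕ) : ℝ := (1 - q ^ n) / (1 - q)

/-- q-factorial [n]_q!. -/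
def qFact (q : ℝ) (n : ℕ) : ℝ := ∏ i ∈ Finset.range n, qInt q (i + 1)

/-- q-binomial coefficient. -/
def qBinom (q : ℝ) (n k : ℕ) : ℝ := qFact q n / (qFact q k * qFact q (n - k))

/-- q-analogue (1-x)_q^m = ∏_{j<m} (1 - q^j x). -/
def qPoch (q x : ℝ) (m : ℕ) : ℝ := ∏ j ∈ Finset.range m, (1 - q ^ j * x)

/-- Riemann-type q-integral over [a,b]. -/
def qRInt (q a b : ℝ) (f : ℝ → ℝ) : ℝ :=
  (1 - q) * (b - a) * ∑' s : ℕ, f (a + (b - a) * q ^ s) * q ^ s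

/-- q-Bernstein-Schurer basis function b_{n,l}^k(q;x). -/
def bern (q : ℝ) (n l k : ℕ) (x : ℝ) : ℝ :=
  qBinom q (n + l) k * x ^ k * qPoch q x (n + l - k)

/-- Stancu-type q-Bernstein-Schurer-Kantorovich operator. -/
def Lop (q α β : ℝ) (n l : ℕ) (f : ℝ → ℝ) (x : ℝ) : ℝ :=
  (qInt q (n + 1) + β) * ∑ k ∈ Finset.range (n + l + 1),
    bern q n l k x * (q ^ k)⁻¹ *
      qRInt q ((qInt q k + α) / (qInt q (n + 1) + β))
        ((qInt q (k + 1) + α) / (qInt q (n + 1) + β)) f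

lemma qFact_succ (q : ℝ) (n : ℕ) : qFact q (n+1) = qFact q n * qInt q (n+1) :=
  Finset.prod_range_succ _ _

lemma qInt_pos {q : ℝ} (hq : 0 < q) (hq1 : q < 1) (n : ℕ) : 0 < qInt q (n+1) := by
  have h : q ^ (n+1) < 1 := pow_lt_one₀ hq.le hq1 (by omega)
  exact div_pos (by linarith) (by linarith)

lemma qFact_pos {q : ℝ} (hq : 0 < q) (hq1 : q < 1) (n : ℕ) : 0 < qFact q n :=
  Finset.prod_pos fun i _ => qInt_pos hq hq1 i

lemma qFact_zero (q : ℝ) : qFact q 0 = 1 := Finset.prod_range_zero _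

lemma qBinom_self {q : ℝ} (hq : 0 < q) (hq1 : q < 1) (n : ℕ) : qBinom q n n = 1 := by
  unfold qBinom
  rw [Nat.sub_self, qFact_zero, mul_one, div_self (qFact_pos hq hq1 n).ne']

lemma qBinom_zero {q : ℝ} (hq : 0 < q) (hq1 : q < 1) (n : ℕ) : qBinom q n 0 = 1 := by
  unfold qBinom
  rw [Nat.sub_zero, qFact_zero, one_mul, div_self (qFact_pos hq hq1 n).ne']

lemma qPoch_zero (q x : ℝ) : qPoch q x 0 = 1 := Finset.prod_range_zero _

lemma qPoch_succ' (q x : ℝ) (m : ℕ) : qPoch q x (m+1) = (1 - x) * qPoch q (q*x) m := by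
  unfold qPoch
  rw [Finset.prod_range_succ', pow_zero, one_mul, mul_comm]
  congr 1
  refine Finset.prod_congr rfl fun i _ => ?_
  rw [pow_succ]; ring

lemma pascal {q : ℝ} (hq : 0 < q) (hq1 : q < 1) {j m : ℕ} (h : j < m) :
    qBinom q (m+1) (j+1) = qBinom q m j + q^(j+1) * qBinom q m (j+1) := by
  obtain ⟨i, rfl⟩ : ∃ i, m = j + 1 + i := ⟨m - (j+1), by omega⟩
  have h1q : (1:ℝ) - q ≠ 0 := ne_of_gt (by linarith)
  have e1 : j + 1 + i + 1 - (j+1) = i + 1 := by omega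
  have e2 : j + 1 + i - j = i + 1 := by omega
  have e3 : j + 1 + i - (j+1) = i := by omega
  unfold qBinom
  rw [e1, e2, e3]
  have hsplit : qInt q (j+1+i+1) = qInt q (j+1) + q^(j+1) * qInt q (i+1) := by
    unfold qInt
    have hp : q^(j+1) * q^(i+1) = q^(j+1+i+1) := by rw [← pow_add, show j+1+(i+1) = j+1+i+1 from by omega]
    field_simp
    linarith [hp]
  rw [qFact_succ q (j+1+i), qFact_succ q j, qFact_succ q i, hsplit]
  have hFj := (qFact_pos hq hq1 j).ne'
  have hFi := (qFact_pos hq hq1 i).ne'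
  have hA := (qInt_pos hq hq1 j).ne'
  have hB := (qInt_pos hq hq1 i).ne'
  field_simp

lemma key {q : ℝ} (hq : 0 < q) (hq1 : q < 1) :
    ∀ (m : ℕ) (x : ℝ), ∑ k ∈ Finset.range (m+1),
      qBinom q m k * q ^ k * x ^ k * qPoch q x (m - k) = 1 - (1 - q^m) * x := by
  intro m
  induction m with
  | zero =>
    intro x
    simp [qBinom_self hq hq1, qPoch_zero]
  | succ m ih =>
    intro x
    have S1 := ih x
    have S2 := ih (q * x)
    rw [Finset.sum_range_succ, Finset.sum_range_succ']
    have hmid : ∑ j ∈ Finset.range m,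
        qBinom q (m+1) (j+1) * q ^ (j+1) * x ^ (j+1) * qPoch q x (m+1 - (j+1))
        = (∑ j ∈ Finset.range m, (q*x) * (qBinom q m j * q ^ j * x ^ j * qPoch q x (m - j)))
          + (∑ j ∈ Finset.range m, (1-x) * (qBinom q m (j+1) * q ^ (j+1) * (q*x) ^ (j+1) * qPoch q (q*x) (m - (j+1)))) := by
      rw [← Finset.sum_add_distrib]
      refine Finset.sum_congr rfl fun j hj => ?_
      have hjm : j < m := Finset.mem_range.mp hj
      rw [pascal hq hq1 hjm, show m + 1 - (j+1) = m - j from by omega,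
        show m - j = (m - (j+1)) + 1 from by omega, qPoch_succ']
      ring
    rw [hmid]
    have hS1 : (∑ j ∈ Finset.range m, (q*x) * (qBinom q m j * q ^ j * x ^ j * qPoch q x (m - j)))
        = (q*x) * ((1 - (1 - q^m) * x) - qBinom q m m * q ^ m * x ^ m * qPoch q x (m - m)) := by
      rw [← Finset.mul_sum]
      congr 1
      rw [eq_sub_iff_add_eq, ← Finset.sum_range_succ]
      exact S1
    have hS2 : (∑ j ∈ Finset.range m, (1-x) * (qBinom q m (j+1) * q ^ (j+1) * (q*x) ^ (j+1) * qPoch q (q*x) (m - (j+1))))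
        = (1-x) * ((1 - (1 - q^m) * (q*x)) - qBinom q m 0 * q ^ 0 * (q*x) ^ 0 * qPoch q (q*x) (m - 0)) := by
      rw [← Finset.mul_sum]
      congr 1
      rw [eq_sub_iff_add_eq, ← S2, Finset.sum_range_succ']
    rw [hS1, hS2, qBinom_self hq hq1, qBinom_zero hq hq1,
      qBinom_self hq hq1, qBinom_zero hq hq1, Nat.sub_self, Nat.sub_zero, Nat.sub_self,
      Nat.sub_zero, qPoch_zero, qPoch_succ']
    ring

theorem bern_qpow_sum (q x : ℝ) (hq : 0 < q) (hq1 : q < 1) (hx0 : 0 ≤ x) (hx1 : x ≤ 1)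
    (n l : ℕ) :
    ∑ k ∈ Finset.range (n + l + 1), bern q n l k x * q ^ k
      = 1 - (1 - q) * qInt q (n + l) * x := by
  have h := key hq hq1 (n+l) x
  have h1q : (1:ℝ) - q ≠ 0 := ne_of_gt (by linarith)
  calc ∑ k ∈ Finset.range (n + l + 1), bern q n l k x * q ^ k
      = ∑ k ∈ Finset.range (n + l + 1), qBinom q (n+l) k * q ^ k * x ^ k * qPoch q x (n + l - k) := by
        refine Finset.sum_congr rfl fun k _ => by unfold bern; ring
    _ = 1 - (1 - q^(n+l)) * x := h
    _ = 1 - (1 - q) * qInt q (n + l) * x := by unfold qInt; field_simp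
end
end

section
/- Let L₁, L₂ be positive linear operators on C([0,a₁]) and C([0,a₂]) respectively with L₁(1)=1, L₂(1)=1, and define the tensor product operator L(f)(x,y) for f ∈ C([0,a₁]×[0,a₂]) so that L(g⊗h) = L₁(g)·L₂(h). If f ∈ Lip_M(α₁,α₂), i.e. |f(t,s)-f(x,y)| ≤ M|t-x|^{α₁}|s-y|^{α₂} with 0 < α₁, α₂ ≤ 1, then |L(f)(x,y) - f(x,y)| ≤ M (L₁((t-x)²)(x))^{α₁/2} (L₂((s-y)²)(y))^{α₂/2}. -/
noncomputable section

/-- The tensor product g ⊗ h of continuous functions on the product of two intervals. -/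
def tensorFn (a₁ a₂ : ℝ) (g : C(Set.Icc (0 : ℝ) a₁, ℝ)) (h : C(Set.Icc (0 : ℝ) a₂, ℝ)) :
    C(Set.Icc (0 : ℝ) a₁ × Set.Icc (0 : ℝ) a₂, ℝ) :=
  ⟨fun p => g p.1 * h p.2,
    (g.continuous.comp continuous_fst).mul (h.continuous.comp continuous_snd)⟩

/-- Pointwise concavity (Bernoulli) bound: for `u ≥ 0`, `ε > 0` and `0 < p ≤ 1`,
`u ^ p ≤ ε ^ p + p * ε ^ (p - 1) * (u - ε)`. -/
lemma rpow_le_tangent {u ε p : ℝ} (hu : 0 ≤ u) (hε : 0 < ε) (hp : 0 < p) (hp' : p ≤ 1) :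
    u ^ p ≤ ε ^ p + p * ε ^ (p - 1) * (u - ε) := by
  have h1 : (u / ε) ^ p ≤ 1 + p * (u / ε - 1) := by
    have := rpow_one_add_le_one_add_mul_self (s := u / ε - 1)
      (by have : 0 ≤ u / ε := div_nonneg hu hε.le; linarith) hp.le hp'
    simpa using this
  have h2 : u ^ p = ε ^ p * (u / ε) ^ p := by
    rw [← Real.mul_rpow hε.le (div_nonneg hu hε.le), mul_div_cancel₀ _ hε.ne']
  rw [h2]
  have h3 : ε ^ p * ((u / ε) ^ p) ≤ ε ^ p * (1 + p * (u / ε - 1)) :=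
    mul_le_mul_of_nonneg_left h1 (Real.rpow_nonneg hε.le _)
  refine h3.trans_eq ?_
  have hεp : ε ^ (p - 1) * ε = ε ^ p := by
    rw [← Real.rpow_add_one hε.ne']; ring_nf
  have hdiv : ε ^ p * (u / ε) = ε ^ (p - 1) * u := by
    rw [← hεp]; field_simp
  have : ε ^ p * (1 + p * (u / ε - 1)) = ε ^ p + p * (ε ^ p * (u / ε)) - p * ε ^ p := by ring
  rw [this, hdiv, ← hεp]; ring

/-- Key univariate estimate: for a positive operator reproducing constants,
`L(|t-x|^α)(x) ≤ (L((t-x)²)(x))^(α/2)`. -/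
lemma key_estimate {a : ℝ} (L : C(Set.Icc (0 : ℝ) a, ℝ) →ₗ[ℝ] C(Set.Icc (0 : ℝ) a, ℝ))
    (hpos : ∀ g, (∀ t, 0 ≤ g t) → ∀ x, 0 ≤ L g x) (hone : L 1 = 1)
    (α : ℝ) (hα : 0 < α) (hα' : α ≤ 1) (x : Set.Icc (0 : ℝ) a) :
    L ⟨fun t => |(t : ℝ) - (x : ℝ)| ^ α,
        (Real.continuous_rpow_const (by positivity)).comp
          ((continuous_subtype_val.sub continuous_const).abs)⟩ x ≤
      (L ⟨fun t => ((t : ℝ) - (x : ℝ)) ^ 2, by fun_prop⟩ x) ^ (α / 2) := by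
  set p := α / 2 with hpdef
  have hp : 0 < p := by positivity
  have hp' : p ≤ 1 := by rw [hpdef]; linarith
  set q : C(Set.Icc (0 : ℝ) a, ℝ) := ⟨fun t => ((t : ℝ) - (x : ℝ)) ^ 2, by fun_prop⟩ with hq
  set g : C(Set.Icc (0 : ℝ) a, ℝ) := ⟨fun t => |(t : ℝ) - (x : ℝ)| ^ α,
        (Real.continuous_rpow_const (by positivity)).comp
          ((continuous_subtype_val.sub continuous_const).abs)⟩ with hg
  set A := L q x with hA
  have hAnn : 0 ≤ A := hpos q (fun t => by simp only [hq, ContinuousMap.coe_mk]; positivity) x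
  -- For every δ > 0, L g x ≤ (A + δ) ^ p
  have hbound : ∀ δ : ℝ, 0 < δ → L g x ≤ (A + δ) ^ p := by
    intro δ hδ
    have hε : 0 < A + δ := by linarith
    set ε := A + δ with hεdef
    set c₂ := p * ε ^ (p - 1) with hc₂
    have hc₂nn : 0 ≤ c₂ := by positivity
    set c₁ := ε ^ p - c₂ * ε with hc₁
    have hptwise : ∀ t, g t ≤ c₁ + c₂ * q t := by
      intro t
      set u := ((t : ℝ) - (x : ℝ)) ^ 2 with hu
      have hun : (0:ℝ) ≤ u := sq_nonneg _
      have htan := rpow_le_tangent (u := u) hun hε hp hp'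
      have habs : |(t : ℝ) - (x : ℝ)| ^ α = u ^ p := by
        have h1 : u = |(t : ℝ) - (x : ℝ)| ^ ((2:ℕ) : ℝ) := by
          rw [Real.rpow_natCast]; rw [hu, sq_abs]
        rw [h1, ← Real.rpow_mul (abs_nonneg _)]
        congr 1; ring
      have hgt : g t = u ^ p := by simp only [hg, ContinuousMap.coe_mk]; exact habs
      have hqt : q t = u := rfl
      rw [hgt, hqt]
      have : ε ^ p + p * ε ^ (p - 1) * (u - ε) = c₁ + c₂ * u := by rw [hc₁, hc₂]; ring
      linarith [htan, this.ge]
    -- apply positivity to c₁ • 1 + c₂ • q - g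
    have hLle : L g x ≤ c₁ + c₂ * A := by
      have h0 : ∀ t, 0 ≤ (c₁ • (1 : C(Set.Icc (0 : ℝ) a, ℝ)) + c₂ • q - g) t := by
        intro t
        have := hptwise t
        simp only [ContinuousMap.sub_apply, ContinuousMap.add_apply, ContinuousMap.smul_apply,
          ContinuousMap.one_apply, smul_eq_mul, mul_one]
        linarith
      have := hpos _ h0 x
      simp only [map_sub, map_add, map_smul, hone, ContinuousMap.sub_apply,
        ContinuousMap.add_apply, ContinuousMap.smul_apply, ContinuousMap.one_apply,
        smul_eq_mul, mul_one] at this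
      linarith
    have hfin : c₁ + c₂ * A ≤ ε ^ p := by
      have : c₁ + c₂ * A = ε ^ p + c₂ * (A - ε) := by rw [hc₁]; ring
      rw [this]
      have : A - ε = -δ := by rw [hεdef]; ring
      rw [this]
      nlinarith
    exact hLle.trans hfin
  -- pass to the limit δ → 0⁺
  have htend : Filter.Tendsto (fun δ : ℝ => (A + δ) ^ p) (nhdsWithin 0 (Set.Ioi 0))
      (nhds (A ^ p)) := by
    have h1 : Filter.Tendsto (fun δ : ℝ => A + δ) (nhdsWithin 0 (Set.Ioi 0)) (nhds A) := by
      have h0 : Filter.Tendsto (fun δ : ℝ => A + δ) (nhds 0) (nhds (A + 0)) :=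
        ((continuous_const (y := A)).add continuous_id).tendsto 0
      simpa using h0.mono_left nhdsWithin_le_nhds
    exact (Real.continuousAt_rpow_const A p (Or.inr hp.le)).tendsto.comp h1
  exact ge_of_tendsto htend (by filter_upwards [self_mem_nhdsWithin] with δ hδ using hbound δ hδ)

theorem bivariate_lipschitz_rate (a₁ a₂ : ℝ) (ha₁ : 0 < a₁) (ha₂ : 0 < a₂)
    (L₁ : C(Set.Icc (0 : ℝ) a₁, ℝ) →ₗ[ℝ] C(Set.Icc (0 : ℝ) a₁, ℝ))
    (L₂ : C(Set.Icc (0 : ℝ) a₂, ℝ) →ₗ[ℝ] C(Set.Icc (0 : ℝ) a₂, ℝ))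
    (L : C(Set.Icc (0 : ℝ) a₁ × Set.Icc (0 : ℝ) a₂, ℝ) →ₗ[ℝ]
         C(Set.Icc (0 : ℝ) a₁ × Set.Icc (0 : ℝ) a₂, ℝ))
    (hpos₁ : ∀ g, (∀ t, 0 ≤ g t) → ∀ x, 0 ≤ L₁ g x)
    (hpos₂ : ∀ h, (∀ s, 0 ≤ h s) → ∀ y, 0 ≤ L₂ h y)
    (hpos : ∀ f, (∀ p, 0 ≤ f p) → ∀ p, 0 ≤ L f p)
    (hone₁ : L₁ 1 = 1) (hone₂ : L₂ 1 = 1)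
    (hfact : ∀ g h, L (tensorFn a₁ a₂ g h) = tensorFn a₁ a₂ (L₁ g) (L₂ h))
    (M α₁ α₂ : ℝ) (hM : 0 < M) (hα₁ : 0 < α₁) (hα₁' : α₁ ≤ 1)
    (hα₂ : 0 < α₂) (hα₂' : α₂ ≤ 1)
    (f : C(Set.Icc (0 : ℝ) a₁ × Set.Icc (0 : ℝ) a₂, ℝ))
    (hf : ∀ p p' : Set.Icc (0 : ℝ) a₁ × Set.Icc (0 : ℝ) a₂,
      |f p - f p'| ≤ M * |(p.1 : ℝ) - (p'.1 : ℝ)| ^ α₁ * |(p.2 : ℝ) - (p'.2 : ℝ)| ^ α₂)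
    (x : Set.Icc (0 : ℝ) a₁) (y : Set.Icc (0 : ℝ) a₂) :
    |L f (x, y) - f (x, y)| ≤
      M * (L₁ ⟨fun t => ((t : ℝ) - (x : ℝ)) ^ 2, by fun_prop⟩ x) ^ (α₁ / 2)
        * (L₂ ⟨fun s => ((s : ℝ) - (y : ℝ)) ^ 2, by fun_prop⟩ y) ^ (α₂ / 2) := by
  set g₁ : C(Set.Icc (0 : ℝ) a₁, ℝ) := ⟨fun t => |(t : ℝ) - (x : ℝ)| ^ α₁,
      (Real.continuous_rpow_const (by positivity)).comp
        ((continuous_subtype_val.sub continuous_const).abs)⟩ with hg₁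
  set h₁ : C(Set.Icc (0 : ℝ) a₂, ℝ) := ⟨fun s => |(s : ℝ) - (y : ℝ)| ^ α₂,
      (Real.continuous_rpow_const (by positivity)).comp
        ((continuous_subtype_val.sub continuous_const).abs)⟩ with hh₁
  have hLone : L 1 = 1 := by
    have h := hfact 1 1
    rw [hone₁, hone₂] at h
    have h11 : tensorFn a₁ a₂ 1 1 = 1 := by
      ext p; simp [tensorFn]
    rwa [h11] at h
  set c := f (x, y) with hc
  set φ : C(Set.Icc (0 : ℝ) a₁ × Set.Icc (0 : ℝ) a₂, ℝ) :=
    M • tensorFn a₁ a₂ g₁ h₁ with hφ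
  have hφbd : ∀ p, |f p - c| ≤ φ p := by
    intro p
    have := hf p (x, y)
    simp only [hφ, ContinuousMap.smul_apply, smul_eq_mul, tensorFn, ContinuousMap.coe_mk,
      hg₁, hh₁]
    calc |f p - c| ≤ M * |(p.1 : ℝ) - (x : ℝ)| ^ α₁ * |(p.2 : ℝ) - (y : ℝ)| ^ α₂ := this
      _ = M * (|(p.1 : ℝ) - (x : ℝ)| ^ α₁ * |(p.2 : ℝ) - (y : ℝ)| ^ α₂) := by ring
  set F : C(Set.Icc (0 : ℝ) a₁ × Set.Icc (0 : ℝ) a₂, ℝ) := f - c • 1 with hF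
  have habs : |L F (x, y)| ≤ L φ (x, y) := by
    have h1 : ∀ p, 0 ≤ (φ - F) p := by
      intro p
      have := (abs_le.mp (hφbd p)).2
      simp only [hF, ContinuousMap.sub_apply, ContinuousMap.smul_apply, ContinuousMap.one_apply,
        smul_eq_mul, mul_one]
      linarith
    have h2 : ∀ p, 0 ≤ (φ + F) p := by
      intro p
      have := (abs_le.mp (hφbd p)).1
      simp only [hF, ContinuousMap.add_apply, ContinuousMap.sub_apply, ContinuousMap.smul_apply,
        ContinuousMap.one_apply, smul_eq_mul, mul_one]
      linarith
    have hp1 := hpos _ h1 (x, y)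
    have hp2 := hpos _ h2 (x, y)
    simp only [map_sub, map_add, ContinuousMap.sub_apply, ContinuousMap.add_apply] at hp1 hp2
    rw [abs_le]; constructor <;> linarith
  have hLF : L F (x, y) = L f (x, y) - c := by
    simp only [hF, map_sub, map_smul, hLone, ContinuousMap.sub_apply, ContinuousMap.smul_apply,
      ContinuousMap.one_apply, smul_eq_mul, mul_one]
  have hLφ : L φ (x, y) = M * (L₁ g₁ x * L₂ h₁ y) := by
    rw [hφ, map_smul, hfact g₁ h₁]
    simp [tensorFn]
  rw [hLF] at habs
  have hkey₁ := key_estimate L₁ hpos₁ hone₁ α₁ hα₁ hα₁' x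
  have hkey₂ := key_estimate L₂ hpos₂ hone₂ α₂ hα₂ hα₂' y
  have hg₁nn : 0 ≤ L₁ g₁ x := hpos₁ g₁ (fun t => by
    simp only [hg₁, ContinuousMap.coe_mk]; positivity) x
  have hh₁nn : 0 ≤ L₂ h₁ y := hpos₂ h₁ (fun s => by
    simp only [hh₁, ContinuousMap.coe_mk]; positivity) y
  calc |L f (x, y) - c| ≤ L φ (x, y) := habs
    _ = M * (L₁ g₁ x * L₂ h₁ y) := hLφ
    _ = M * L₁ g₁ x * L₂ h₁ y := by ring
    _ ≤ M * (L₁ ⟨fun t => ((t : ℝ) - (x : ℝ)) ^ 2, by fun_prop⟩ x) ^ (α₁ / 2)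
        * (L₂ ⟨fun s => ((s : ℝ) - (y : ℝ)) ^ 2, by fun_prop⟩ y) ^ (α₂ / 2) := by
      have h1 : L₁ g₁ x ≤ (L₁ ⟨fun t => ((t : ℝ) - (x : ℝ)) ^ 2, by fun_prop⟩ x) ^ (α₁ / 2) :=
        hkey₁
      have h2 : L₂ h₁ y ≤ (L₂ ⟨fun s => ((s : ℝ) - (y : ℝ)) ^ 2, by fun_prop⟩ y) ^ (α₂ / 2) :=
        hkey₂
      have hb1 : 0 ≤ (L₁ ⟨fun t => ((t : ℝ) - (x : ℝ)) ^ 2, by fun_prop⟩ x) ^ (α₁ / 2) :=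
        hg₁nn.trans h1
      exact mul_le_mul (mul_le_mul le_rfl h1 hg₁nn hM.le) h2 hh₁nn
        (mul_nonneg hM.le hb1)
end
end
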